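/- Let D ⊆ ℝ^d be a set such that ((D − D) − (D − D)) ∩ U = {0} for some neighborhood U of 0 (a Meyer-type condition on the difference set of return vectors). Let n ≥ 1, x ∈ ℝ^d, ε > 0 with B(0, 4ε) ⊆ U, and suppose c₀, c₁, …, c_n ∈ B(0, ε) are vectors such that kx + c_k ∈ D for all k = 0, 1, …, n. If moreover all the consecutive differences (k+1)x + c_{k+1} − (kx + c_k) lie in D − D, then all these consecutive differences are equal: there exists z ∈ ℝ^d such that (k+1)x + c_{k+1} − (kx + c_k) = z for every k = 0, …, n−1. -/
import Mathlib


open Pointwise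

/-- In a Meyer-type set, an almost arithmetic progression with small
errors c_k is an exact arithmetic progression: all consecutive differences agree. -/
theorem stmt2 (d : ℕ) (D U : Set (EuclideanSpace ℝ (Fin d)))
    (hU : U ∈ nhds (0 : EuclideanSpace ℝ (Fin d)))
    (hMeyer : ((D - D) - (D - D)) ∩ U = {0})
    (n : ℕ) (hn : 1 ≤ n) (x : EuclideanSpace ℝ (Fin d)) (ε : ℝ) (hε : 0 < ε)
    (hball : Metric.closedBall (0 : EuclideanSpace ℝ (Fin d)) (4 * ε) ⊆ U)
    (c : ℕ → EuclideanSpace ℝ (Fin d))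
    (hc : ∀ k ≤ n, c k ∈ Metric.closedBall (0 : EuclideanSpace ℝ (Fin d)) ε)
    (hD : ∀ k ≤ n, k • x + c k ∈ D)
    (hdiff : ∀ k < n, ((k + 1) • x + c (k + 1)) - (k • x + c k) ∈ D - D) :
    ∃ z : EuclideanSpace ℝ (Fin d),
      ∀ k < n, ((k + 1) • x + c (k + 1)) - (k • x + c k) = z := by
  refine ⟨(1 • x + c 1) - (0 • x + c 0), fun k hk => ?_⟩
  set dk := ((k + 1) • x + c (k + 1)) - (k • x + c k) with hdk
  set d0 := (1 • x + c 1) - (0 • x + c 0) with hd0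
  have h0 : (0 : ℕ) < n := hn
  have hmem : dk - d0 ∈ ((D - D) - (D - D)) ∩ U := by
    constructor
    · exact Set.sub_mem_sub (hdiff k hk) (by rw [hd0]; exact hdiff 0 h0)
    · apply hball
      have hnorm : ∀ m, m ≤ n → ‖c m‖ ≤ ε := fun m hm => by
        simpa [mem_closedBall_zero_iff] using hc m hm
      have hdke : dk - d0 = (c (k+1) - c k) - (c 1 - c 0) := by
        simp only [hdk, hd0, add_smul, one_smul, zero_smul]
        abel
      rw [mem_closedBall_zero_iff, hdke]
      have h1 : ‖(c (k+1) - c k) - (c 1 - c 0)‖ ≤ ‖c (k+1)‖ + ‖c k‖ + ‖c 1‖ + ‖c 0‖ := by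
        calc ‖(c (k+1) - c k) - (c 1 - c 0)‖ ≤ ‖c (k+1) - c k‖ + ‖c 1 - c 0‖ := norm_sub_le _ _
          _ ≤ (‖c (k+1)‖ + ‖c k‖) + (‖c 1‖ + ‖c 0‖) :=
            add_le_add (norm_sub_le _ _) (norm_sub_le _ _)
          _ = _ := by ring
      have := hnorm (k+1) hk
      have := hnorm k (le_of_lt hk)
      have := hnorm 1 hn
      have := hnorm 0 (Nat.zero_le _)
      linarith
  rw [hMeyer] at hmem
  have : dk - d0 = 0 := hmem
  exact sub_eq_zero.mp this
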